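/- Assume s ≥ 2. Let δ_1 ∈ ℂ[x,y] with Supp(δ_1) ⊆ N_1 \ {(0, e_1)}, set f_1 = y^{e_1} + δ_1, and assume ι_1^* f_1 = 0. Then for every j = 2, …, s: ϑ_{ι_j}(f_1) = γ_2^{(j)} and ϑ_{ι_j}(∂f_1/∂y) = γ_2^{(j)} − e_jλ_2. -/

import Mathlib

open Polynomial

/-- order ≥ d : all coefficients below `d` vanish. -/
def OGpf (q : Polynomial ℂ) (d : ℕ) : Prop := ∀ i, i < d → q.coeff i = 0

lemma OGpf.mono {q : Polynomial ℂ} {d d' : ℕ} (h : OGpf q d) (hle : d' ≤ d) : OGpf q d' :=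
  fun i hi => h i (lt_of_lt_of_le hi hle)

lemma OGpf_zero (d : ℕ) : OGpf 0 d := fun i _ => by simp

lemma OGpf_add {q r : Polynomial ℂ} {d : ℕ} (hq : OGpf q d) (hr : OGpf r d) :
    OGpf (q + r) d := fun i hi => by simp [hq i hi, hr i hi]

lemma OGpf_sum {ι : Type*} {s : Finset ι} {f : ι → Polynomial ℂ} {d : ℕ}
    (h : ∀ i ∈ s, OGpf (f i) d) : OGpf (∑ i ∈ s, f i) d := fun n hn => by
  rw [Polynomial.finset_sum_coeff]
  exact Finset.sum_eq_zero fun i hi => h i hi n hn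

lemma OGpf_mul {p q : Polynomial ℂ} {a b : ℕ} (hp : OGpf p a) (hq : OGpf q b) :
    OGpf (p * q) (a + b) := by
  intro i hi
  rw [Polynomial.coeff_mul]
  apply Finset.sum_eq_zero
  rintro ⟨x, y⟩ hxy
  rw [Finset.HasAntidiagonal.mem_antidiagonal] at hxy
  rcases lt_or_ge x a with hx | hx
  · simp [hp x hx]
  · have : y < b := by omega
    simp [hq y this]

lemma OGpf_pow {p : Polynomial ℂ} {a : ℕ} (hp : OGpf p a) (n : ℕ) : OGpf (p ^ n) (n * a) := by
  induction n with
  | zero => exact fun i hi => absurd hi (by simp)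
  | succ n ih =>
      have := OGpf_mul ih hp
      rw [← pow_succ] at this
      have h2 : (n + 1) * a = n * a + a := by ring
      rw [h2]; exact this

lemma coeff_mul_OGpf {p q : Polynomial ℂ} {a b : ℕ} (hp : OGpf p a) (hq : OGpf q b) :
    (p * q).coeff (a + b) = p.coeff a * q.coeff b := by
  rw [Polynomial.coeff_mul]
  apply Finset.sum_eq_single_of_mem (a, b)
  · rw [Finset.HasAntidiagonal.mem_antidiagonal]
  · rintro ⟨x, y⟩ hxy hne
    rw [Finset.HasAntidiagonal.mem_antidiagonal] at hxy
    rcases lt_or_ge x a with hx | hx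
    · simp [hp x hx]
    rcases lt_or_ge y b with hy | hy
    · simp [hq y hy]
    exfalso; apply hne
    have hx' : x = a := by omega
    have hy' : y = b := by omega
    simp [hx', hy']

lemma coeff_pow_OGpf {p : Polynomial ℂ} {a : ℕ} (hp : OGpf p a) (n : ℕ) :
    (p ^ n).coeff (n * a) = p.coeff a ^ n := by
  induction n with
  | zero => simp
  | succ n ih =>
      have h2 : (n + 1) * a = n * a + a := by ring
      rw [h2, pow_succ, coeff_mul_OGpf (OGpf_pow hp n) hp, ih, pow_succ]

lemma OGpf_C_mul {q : Polynomial ℂ} {d : ℕ} (x : ℂ) (h : OGpf q d) :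
    OGpf (Polynomial.C x * q) d := fun i hi => by
  rw [Polynomial.coeff_C_mul, h i hi, mul_zero]

lemma td_OGpf {q : Polynomial ℂ} {d : ℕ} (h1 : OGpf q d) (h2 : q.coeff d ≠ 0) :
    q.trailingDegree = (d : ℕ∞) := by
  have hq : q ≠ 0 := fun h => h2 (by simp [h])
  rw [Polynomial.trailingDegree_eq_natTrailingDegree hq]
  have : q.natTrailingDegree = d :=
    le_antisymm (Polynomial.natTrailingDegree_le_of_ne_zero h2)
      (Polynomial.le_natTrailingDegree hq (fun m hm => h1 m hm))
  exact_mod_cast this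

lemma OGpf_expand_mul {em v d : ℕ} (hem : 0 < em) {q W : Polynomial ℂ}
    (hW : OGpf W v) (h : ∀ α, q.coeff α ≠ 0 → d ≤ em * α + v) :
    OGpf (Polynomial.expand ℂ em q * W) d := by
  intro i hi
  rw [Polynomial.coeff_mul]
  apply Finset.sum_eq_zero
  rintro ⟨x, y⟩ hxy
  rw [Finset.HasAntidiagonal.mem_antidiagonal] at hxy
  by_cases hx : (Polynomial.expand ℂ em q).coeff x = 0
  · rw [hx, zero_mul]
  rcases lt_or_ge y v with hy | hy
  · rw [hW y hy, mul_zero]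
  exfalso
  rw [Polynomial.coeff_expand hem] at hx
  split_ifs at hx with hdvd
  · have hxe : em * (x / em) = x := Nat.mul_div_cancel' hdvd
    have := h _ hx
    omega
  · exact hx rfl

lemma OGpf_eval₂_mul {em : ℕ} (hem : 0 < em) {H : Polynomial (Polynomial ℂ)}
    {Y₀ Rr : Polynomial ℂ} {w v d n : ℕ} (hY : OGpf Y₀ w) (hR : OGpf Rr v)
    (h : ∀ α β, (H.coeff β).coeff α ≠ 0 → d ≤ em * α + (β * w + n * v)) :
    OGpf (Polynomial.eval₂ (Polynomial.expand ℂ em).toRingHom Y₀ H * Rr ^ n) d := by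
  rw [Polynomial.eval₂_eq_sum, Polynomial.sum_def, Finset.sum_mul]
  apply OGpf_sum
  intro β hβ
  rw [mul_assoc]
  exact OGpf_expand_mul hem (OGpf_mul (OGpf_pow hY β) (OGpf_pow hR n))
    (fun α hα => h α β hα)

lemma arithA_pf {m P Q K κ α β n : ℕ} (hm : 1 ≤ m) (hQ : m * P + 1 ≤ Q) (hK : K = κ + 1)
    (h : K * P + 1 ≤ K * α + P * (β + n + 1)) :
    κ * (m * P) + 1 ≤ (m * K) * α + (β * (m * P) + n * Q) := by
  subst hK
  have h1 : m * ((κ+1) * P + 1) ≤ m * ((κ+1) * α + P * (β + n + 1)) := Nat.mul_le_mul_left m h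
  have h2 : n * (m * P + 1) ≤ n * Q := Nat.mul_le_mul_left n hQ
  nlinarith [h1, h2]

lemma arithB_pf {m P Q K κ α β n : ℕ} (hm : 1 ≤ m) (hQ : m * P + 1 ≤ Q) (hK : K = κ + 1)
    (hn : 2 ≤ n) (h : K * P ≤ K * α + P * (β + n)) :
    κ * (m * P) + Q + 1 ≤ (m * K) * α + (β * (m * P) + n * Q) := by
  subst hK
  have h1 : m * ((κ+1) * P) ≤ m * ((κ+1) * α + P * (β + n)) := Nat.mul_le_mul_left m h
  zify at *
  nlinarith [mul_nonneg (show (0:ℤ) ≤ (n:ℤ) - 2 by linarith)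
      (show (0:ℤ) ≤ (Q:ℤ) - (m:ℤ) * P - 1 by linarith), h1]

lemma arithC_pf {m P Q κ β n : ℕ} (hQ : m * P + 1 ≤ Q) (hβ : β + n = κ) (hn : 1 ≤ n) :
    κ * (m * P) + 1 ≤ β * (m * P) + n * Q := by
  have h2 : n * (m * P + 1) ≤ n * Q := Nat.mul_le_mul_left n hQ
  nlinarith [h2]

lemma hasse_map_pf (f : Polynomial ℂ →+* Polynomial ℂ) (n : ℕ) (W : Polynomial (Polynomial ℂ)) :
    Polynomial.hasseDeriv n (Polynomial.map f W) = Polynomial.map f (Polynomial.hasseDeriv n W) := by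
  ext k
  simp [Polynomial.hasseDeriv_coeff, Polynomial.coeff_map]

lemma aeval_X_pow_eq_expand_pf (eN : ℕ) (q : Polynomial ℂ) :
    Polynomial.aeval ((Polynomial.X : Polynomial ℂ) ^ eN) q = Polynomial.expand ℂ eN q := by
  rw [Polynomial.aeval_def, Polynomial.algebraMap_eq, ← Polynomial.coe_expand]

noncomputable def pOrdQ (p : Polynomial ℂ) : WithTop ℚ :=
  WithTop.map (fun m : ℕ => (m : ℚ)) p.trailingDegree

/-- Truncated parametrization pullback on ℂ[x][y]: x ↦ t^e, y ↦ yi. -/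
noncomputable def iotaP (e : ℕ) (yi : Polynomial ℂ) (g : Polynomial (Polynomial ℂ)) :
    Polynomial ℂ :=
  Polynomial.eval₂ (Polynomial.aeval (Polynomial.X ^ e : Polynomial ℂ)).toRingHom yi g

set_option maxHeartbeats 1600000

theorem stmt_17
    (s : ℕ) (hs : 1 ≤ s)
    (lam : ℕ → ℚ) (hlam1 : 1 < lam 1)
    (hlam_mono : ∀ i, 1 ≤ i → i < s → lam i < lam (i + 1))
    (M : ℕ → AddSubgroup ℚ)
    (hM : ∀ i, M i = AddSubgroup.closure ({1} ∪ lam '' Set.Icc 1 i))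
    (hlamM : ∀ i, 1 ≤ i → i ≤ s → lam i ∉ M (i - 1))
    (kk : ℕ → ℕ)
    (hkk : ∀ i, 1 ≤ i → i ≤ s →
      IsLeast {m : ℕ | 0 < m ∧ (m : ℚ) * lam i ∈ M (i - 1)} (kk i))
    (e : ℕ → ℕ) (he0 : e 0 = 1)
    (he : ∀ i, 1 ≤ i → i ≤ s → e i = kk i * e (i - 1))
    (gam : ℕ → ℕ → ℚ)
    (hgam1 : ∀ j, 1 ≤ j → j ≤ s → gam j 1 = (e j : ℚ) * lam 1)
    (hgam : ∀ j, 1 ≤ j → j ≤ s → ∀ ℓ, 1 ≤ ℓ → ℓ ≤ j - 1 →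
      gam j (ℓ + 1) = (kk ℓ : ℚ) * gam j ℓ - (e j : ℚ) * lam ℓ + (e j : ℚ) * lam (ℓ + 1))
    (c : ℕ → ℂ) (hc : ∀ ℓ, 1 ≤ ℓ → ℓ ≤ s → c ℓ ≠ 0)
    (φ : ℕ → Polynomial ℂ)
    (hφ0 : ∀ ℓ, 1 ≤ ℓ → ℓ ≤ s → (φ ℓ).coeff 0 = 0)
    (hφsupp : ∀ ℓ, 1 ≤ ℓ → ℓ ≤ s → ∀ a ∈ (φ ℓ).support,
      ∃ m ∈ M ℓ, (a : ℚ) = (e s : ℚ) * m)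
    (hφord : ∀ ℓ, 1 ≤ ℓ → ℓ ≤ s → ∀ a ∈ (φ ℓ).support, (e s : ℚ) * lam ℓ < (a : ℚ))
    (hφdeg : ∀ ℓ, 1 ≤ ℓ → ℓ < s → ∀ a ∈ (φ ℓ).support, (a : ℚ) < (e s : ℚ) * lam (ℓ + 1))
    (E : ℕ → ℕ → ℕ)
    (hE : ∀ i, 1 ≤ i → i ≤ s → ∀ ℓ, 1 ≤ ℓ → ℓ ≤ i → (E i ℓ : ℚ) = (e i : ℚ) * lam ℓ)
    (φs : ℕ → ℕ → Polynomial ℂ)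
    (hφs : ∀ i, 1 ≤ i → i ≤ s → ∀ ℓ, 1 ≤ ℓ → ℓ ≤ i →
      (φs i ℓ).comp (Polynomial.X ^ (e s / e i)) = φ ℓ)
    (Y : ℕ → Polynomial ℂ)
    (hY : ∀ i, 1 ≤ i → i ≤ s →
      Y i = ∑ ℓ ∈ Finset.Icc 1 i, (Polynomial.C (c ℓ) * Polynomial.X ^ E i ℓ + φs i ℓ))
    (mu : ℕ → ℚ)
    (hmu : ∀ i, 1 ≤ i → i ≤ s →
      (φ i ≠ 0 → mu i = ((φs i i).natDegree : ℚ) / (e i : ℚ)) ∧ (φ i = 0 → mu i = lam i))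
    (NN : ℕ → Set (ℕ × ℕ))
    (hNN : ∀ i, 1 ≤ i → i ≤ s → NN i = {p : ℕ × ℕ |
      (e i : ℚ) * ((kk 1 : ℚ) * lam 1) ≤ (kk 1 : ℚ) * p.1 + ((kk 1 : ℚ) * lam 1) * p.2 ∧
      (e i : ℚ) * p.1 + ((e i : ℚ) * mu i) * p.2 ≤ (e i : ℚ) * ((e i : ℚ) * mu i)})
    (hs2 : 2 ≤ s) :
    ∀ δ : Polynomial (Polynomial ℂ),
      (∀ α β : ℕ, (δ.coeff β).coeff α ≠ 0 → (α, β) ∈ NN 1 ∧ (α, β) ≠ (0, e 1)) →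
      iotaP (e 1) (Y 1) (Polynomial.X ^ e 1 + δ) = 0 →
      ∀ j, 2 ≤ j → j ≤ s →
        pOrdQ (iotaP (e j) (Y j) (Polynomial.X ^ e 1 + δ)) = ((gam j 2 : ℚ) : WithTop ℚ) ∧
        pOrdQ (iotaP (e j) (Y j) (Polynomial.derivative (Polynomial.X ^ e 1 + δ))) =
          ((gam j 2 - (e j : ℚ) * lam 2 : ℚ) : WithTop ℚ) := by
  intro δ hδsupp h0 j hj2 hjs
  classical
  have h1s : 1 ≤ s := hs
  have hj1 : 1 ≤ j := by omega
  -- positivity of e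
  have hepos : ∀ i, i ≤ s → 0 < e i := by
    intro i
    induction i with
    | zero => intro _; simp [he0]
    | succ n ih =>
        intro hns
        rw [he (n + 1) (by omega) hns]
        have hk := (hkk (n + 1) (by omega) hns).1.1
        simp only [Nat.add_sub_cancel]
        exact Nat.mul_pos hk (ih (by omega))
  -- divisibility chain
  have hdvd : ∀ a b, a ≤ b → b ≤ s → e a ∣ e b := by
    intro a b hab
    induction b, hab using Nat.le_induction with
    | base => intro _; exact dvd_rfl
    | succ b hab ih =>
        intro hbs
        have hb : e (b + 1) = kk (b + 1) * e b := by
          rw [he (b + 1) (by omega) hbs]; simp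
        rw [hb]
        exact (ih (by omega)).mul_left _
  have he1kk : e 1 = kk 1 := by rw [he 1 le_rfl h1s]; simp [he0]
  have hKpos : 0 < e 1 := hepos 1 h1s
  obtain ⟨κ, hκ⟩ : ∃ κ, e 1 = κ + 1 := ⟨e 1 - 1, by omega⟩
  -- strict monotonicity of lam
  have hstrictlam : ∀ a b, 1 ≤ a → a < b → b ≤ s → lam a < lam b := by
    intro a b ha hab
    induction b, hab using Nat.le_induction with
    | base => intro hbs; exact hlam_mono a ha (by omega)
    | succ b hab ih =>
        intro hbs
        exact lt_trans (ih (by omega)) (hlam_mono b (by omega) (by omega))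
  -- m and D
  obtain ⟨m, hmeq⟩ := hdvd 1 j hj1 hjs
  have hmK : e j = m * e 1 := by rw [hmeq]; ring
  have hm1 : 1 ≤ m := by
    have := hepos j hjs
    rcases Nat.eq_zero_or_pos m with h | h
    · rw [h] at hmK; omega
    · exact h
  obtain ⟨D, hDeq⟩ := hdvd j s hjs le_rfl
  have hD1 : 1 ≤ D := by
    have := hepos s le_rfl
    rcases Nat.eq_zero_or_pos D with h | h
    · rw [h, Nat.mul_zero] at hDeq; omega
    · exact h
  have hesj : e s / e j = D := by rw [hDeq]; exact Nat.mul_div_cancel_left _ (hepos j hjs)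
  have hes1 : e s / e 1 = D * m := by
    rw [hDeq, hmK]
    rw [show m * e 1 * D = D * m * e 1 by ring]
    exact Nat.mul_div_cancel _ hKpos
  -- P, Q
  set P := E 1 1 with hPdef
  set Q := E j 2 with hQdef
  have hPq : (P : ℚ) = (e 1 : ℚ) * lam 1 := hE 1 le_rfl h1s 1 le_rfl le_rfl
  have hQq : (Q : ℚ) = (e j : ℚ) * lam 2 := hE j hj1 hjs 2 (by omega) hj2
  have hejq : (e j : ℚ) = (m : ℚ) * (e 1 : ℚ) := by exact_mod_cast congrArg (Nat.cast (R := ℚ)) hmK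
  have hPjq : ((m * P : ℕ) : ℚ) = (e j : ℚ) * lam 1 := by push_cast [hPq, hejq]; ring
  have hPj : E j 1 = m * P := by
    have h1 : ((E j 1 : ℕ) : ℚ) = ((m * P : ℕ) : ℚ) := by
      rw [hE j hj1 hjs 1 le_rfl hj1, hPjq]
    exact_mod_cast h1
  have hlam12 : lam 1 < lam 2 := hstrictlam 1 2 le_rfl (by omega) hs2
  have hejpos : (0 : ℚ) < (e j : ℚ) := by exact_mod_cast hepos j hjs
  have hQgt : m * P + 1 ≤ Q := by
    have h1 : ((m * P : ℕ) : ℚ) < (Q : ℚ) := by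
      rw [hPjq, hQq]; exact mul_lt_mul_of_pos_left hlam12 hejpos
    have : m * P < Q := by exact_mod_cast h1
    omega
  have hPpos : 0 < P := by
    have h1 : (0 : ℚ) < (P : ℚ) := by
      rw [hPq]
      have : (0:ℚ) < (e 1 : ℚ) := by exact_mod_cast hKpos
      nlinarith
    exact_mod_cast h1
  -- coprimality of e 1 and P
  have hcop : Nat.Coprime (e 1) P := by
    by_contra hg
    have hgK : Nat.gcd (e 1) P ∣ e 1 := Nat.gcd_dvd_left _ _
    have hgP : Nat.gcd (e 1) P ∣ P := Nat.gcd_dvd_right _ _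
    have hgpos : 0 < Nat.gcd (e 1) P := Nat.gcd_pos_of_pos_left _ hKpos
    have hg2 : 2 ≤ Nat.gcd (e 1) P := by
      rcases Nat.lt_or_ge (Nat.gcd (e 1) P) 2 with h | h
      · exfalso; apply hg; unfold Nat.Coprime; omega
      · exact h
    obtain ⟨K', hK'⟩ := hgK
    obtain ⟨P', hP'⟩ := hgP
    have hK'pos : 0 < K' := by
      rcases Nat.eq_zero_or_pos K' with h | h
      · rw [h, Nat.mul_zero] at hK'; omega
      · exact h
    have hgq : (0:ℚ) < (Nat.gcd (e 1) P : ℚ) := by exact_mod_cast hgpos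
    have hmem : ((K' : ℕ) : ℚ) * lam 1 ∈ M 0 := by
      have heq : ((K' : ℕ) : ℚ) * lam 1 = ((P' : ℕ) : ℚ) := by
        have h2 : ((Nat.gcd (e 1) P : ℚ)) * ((K' : ℚ) * lam 1) = ((Nat.gcd (e 1) P : ℚ)) * (P' : ℚ) := by
          have hKc : ((e 1 : ℕ) : ℚ) = (Nat.gcd (e 1) P : ℚ) * (K' : ℚ) := by exact_mod_cast congrArg (Nat.cast (R := ℚ)) hK'
          have hPc : ((P : ℕ) : ℚ) = (Nat.gcd (e 1) P : ℚ) * (P' : ℚ) := by exact_mod_cast congrArg (Nat.cast (R := ℚ)) hP'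
          calc ((Nat.gcd (e 1) P : ℚ)) * ((K' : ℚ) * lam 1) = ((e 1 : ℚ)) * lam 1 := by rw [hKc]; ring
            _ = (P : ℚ) := hPq.symm
            _ = _ := hPc
        exact mul_left_cancel₀ (ne_of_gt hgq) h2
      rw [heq, hM 0]
      have hIcc : Set.Icc (1:ℕ) 0 = ∅ := Set.Icc_eq_empty (by omega)
      rw [hIcc, Set.image_empty, Set.union_empty]
      exact AddSubgroup.mem_closure_singleton.mpr ⟨(P' : ℤ), by simp⟩
    have hle := (hkk 1 le_rfl h1s).2 ⟨hK'pos, hmem⟩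
    have hK'lt : K' < e 1 := by
      have h2 : 2 * K' ≤ Nat.gcd (e 1) P * K' := Nat.mul_le_mul_right K' hg2
      omega
    omega
  -- mu 1 positive
  have hmu1pos : 0 < mu 1 := by
    obtain ⟨hmu1a, hmu1b⟩ := hmu 1 le_rfl h1s
    by_cases hφ1 : φ 1 = 0
    · rw [hmu1b hφ1]; linarith
    · rw [hmu1a hφ1]
      have hdeg : 0 < (φs 1 1).natDegree := by
        by_contra hle
        have h0' : (φs 1 1).natDegree = 0 := by omega
        have hCform := Polynomial.eq_C_of_natDegree_eq_zero h0'
        apply hφ1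
        have hcomp := hφs 1 le_rfl h1s 1 le_rfl le_rfl
        rw [hCform, Polynomial.C_comp] at hcomp
        have hc0 := hφ0 1 le_rfl h1s
        rw [← hcomp] at hc0 ⊢
        simp only [Polynomial.coeff_C_zero] at hc0
        rw [hc0, map_zero]
      have h1 : (0:ℚ) < ((φs 1 1).natDegree : ℚ) := by exact_mod_cast hdeg
      have h2 : (0:ℚ) < (e 1 : ℚ) := by exact_mod_cast hKpos
      positivity
  -- unpack support conditions
  have hδNN : ∀ α β : ℕ, (δ.coeff β).coeff α ≠ 0 →
      (((e 1:ℚ) * ((kk 1:ℚ) * lam 1) ≤ (kk 1:ℚ) * α + ((kk 1:ℚ) * lam 1) * β ∧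
       (e 1:ℚ) * α + ((e 1:ℚ) * mu 1) * β ≤ (e 1:ℚ) * ((e 1:ℚ) * mu 1)) ∧ (α, β) ≠ (0, e 1)) := by
    intro α β h
    obtain ⟨h1, h2⟩ := hδsupp α β h
    rw [hNN 1 le_rfl h1s] at h1
    exact ⟨h1, h2⟩
  have hKq : ((e 1 : ℕ) : ℚ) = (kk 1 : ℚ) := by exact_mod_cast congrArg (Nat.cast (R := ℚ)) he1kk
  have hβlt : ∀ α β : ℕ, (δ.coeff β).coeff α ≠ 0 → β < e 1 := by
    intro α β h
    obtain ⟨⟨hi1, hi2⟩, hne⟩ := hδNN α β h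
    by_contra hge
    push_neg at hge
    have hE1 : (0:ℚ) < (e 1:ℚ) := by exact_mod_cast hKpos
    have hβq : (e 1:ℚ) ≤ (β:ℚ) := by exact_mod_cast hge
    have hUE : (0:ℚ) < (e 1:ℚ) * mu 1 := mul_pos hE1 hmu1pos
    have hUEβ : ((e 1:ℚ) * mu 1) * (e 1:ℚ) ≤ ((e 1:ℚ) * mu 1) * β := by nlinarith
    have hαle : (α:ℚ) ≤ 0 := by nlinarith
    have hα0 : α = 0 := by exact_mod_cast le_antisymm hαle (Nat.cast_nonneg α)
    have hβK : (β:ℚ) ≤ (e 1:ℚ) := by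
      rw [hα0] at hi2
      push_cast at hi2
      nlinarith [mul_pos hE1 hmu1pos]
    have hβeq : β = e 1 := le_antisymm (by exact_mod_cast hβK) hge
    exact hne (by simp [hα0, hβeq])
  have hedge : ∀ α β : ℕ, (δ.coeff β).coeff α ≠ 0 → e 1 * P ≤ e 1 * α + P * β := by
    intro α β h
    obtain ⟨⟨hi1, _⟩, _⟩ := hδNN α β h
    have h2 : ((e 1:ℚ)) * (P:ℚ) ≤ (e 1:ℚ) * α + (P:ℚ) * β := by
      rw [hPq]
      calc (e 1:ℚ) * ((e 1:ℚ) * lam 1) = (e 1:ℚ) * ((kk 1:ℚ) * lam 1) := by rw [hKq]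
        _ ≤ (kk 1:ℚ) * α + ((kk 1:ℚ) * lam 1) * β := hi1
        _ = (e 1:ℚ) * α + ((e 1:ℚ) * lam 1) * β := by rw [← hKq]
    exact_mod_cast h2
  have hedgestrict : ∀ α β : ℕ, (δ.coeff β).coeff α ≠ 0 → 1 ≤ β →
      e 1 * P + 1 ≤ e 1 * α + P * β := by
    intro α β h hβ1
    have hle := hedge α β h
    rcases Nat.lt_or_ge (e 1 * P) (e 1 * α + P * β) with hlt | hge
    · omega
    exfalso
    have heq : e 1 * α + P * β = e 1 * P := le_antisymm hge hle
    have hdvdPβ : e 1 ∣ P * β := by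
      have heqz : (e 1 : ℤ) * α + (P : ℤ) * β = (e 1 : ℤ) * (P : ℤ) := by exact_mod_cast heq
      have : (e 1 : ℤ) ∣ (P : ℤ) * β := ⟨(P : ℤ) - α, by linear_combination heqz⟩
      exact_mod_cast this
    have hdvdβ : e 1 ∣ β := Nat.Coprime.dvd_of_dvd_mul_left hcop hdvdPβ
    have hβge : e 1 ≤ β := Nat.le_of_dvd (by omega) hdvdβ
    exact absurd (hβlt α β h) (by omega)
  -- facts about F
  set F : Polynomial (Polynomial ℂ) := Polynomial.X ^ e 1 + δ with hFdef
  have hδhigh : ∀ β, e 1 ≤ β → δ.coeff β = 0 := by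
    intro β hβ
    apply Polynomial.ext
    intro α
    rw [Polynomial.coeff_zero]
    by_contra h'
    exact absurd (hβlt α β h') (by omega)
  have hFK : F.coeff (e 1) = 1 := by
    rw [hFdef, Polynomial.coeff_add, Polynomial.coeff_X_pow, if_pos rfl, hδhigh (e 1) le_rfl,
      add_zero]
  have hFne : ∀ β, β ≠ e 1 → F.coeff β = δ.coeff β := by
    intro β hβ
    rw [hFdef, Polynomial.coeff_add, Polynomial.coeff_X_pow, if_neg hβ, zero_add]
  have hFhigh : ∀ β, e 1 < β → F.coeff β = 0 := by
    intro β hβ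
    rw [hFne β (by omega), hδhigh β (by omega)]
  have hFsupp : ∀ α β : ℕ, (F.coeff β).coeff α ≠ 0 → e 1 * P ≤ e 1 * α + P * β := by
    intro α β h
    by_cases hβ : β = e 1
    · subst hβ
      rw [hFK] at h
      have hα0 : α = 0 := by
        by_contra hne
        exact h (by simp [Polynomial.coeff_one, hne])
      subst hα0
      simp [mul_comm]
    · rw [hFne β hβ] at h
      exact hedge α β h
  have hF'supp : ∀ α β : ℕ, ((Polynomial.derivative F).coeff β).coeff α ≠ 0 →
      (e 1 * P + 1 ≤ e 1 * α + P * (β + 1)) ∨ (α = 0 ∧ β + 1 = e 1) := by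
    intro α β h
    rw [Polynomial.coeff_derivative] at h
    have h2 : (F.coeff (β + 1)).coeff α ≠ 0 := by
      intro hz
      apply h
      have hCeq : ((β : Polynomial ℂ) + 1) = Polynomial.C ((β : ℂ) + 1) := by
        rw [map_add, map_one, Polynomial.C_eq_natCast]
      rw [hCeq, Polynomial.coeff_mul_C, hz, zero_mul]
    by_cases hβ : β + 1 = e 1
    · right
      refine ⟨?_, hβ⟩
      rw [hβ, hFK] at h2
      by_contra hne
      exact h2 (by simp [Polynomial.coeff_one, hne])
    · left
      rw [hFne (β + 1) hβ] at h2
      exact hedgestrict α (β + 1) h2 (by omega)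
  -- ring homs
  set Ψ : Polynomial ℂ →+* Polynomial ℂ := (Polynomial.expand ℂ (e j)).toRingHom with hΨdef
  have hψeq : (Polynomial.aeval ((Polynomial.X : Polynomial ℂ) ^ e j)).toRingHom = Ψ :=
    RingHom.ext fun q => aeval_X_pow_eq_expand_pf (e j) q
  have hψ1eq : (Polynomial.aeval ((Polynomial.X : Polynomial ℂ) ^ e 1)).toRingHom =
      (Polynomial.expand ℂ (e 1)).toRingHom :=
    RingHom.ext fun q => aeval_X_pow_eq_expand_pf (e 1) q
  have hcomphom : ((Polynomial.expand ℂ m).toRingHom).comp (Polynomial.expand ℂ (e 1)).toRingHom = Ψ := by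
    apply RingHom.ext
    intro q
    show Polynomial.expand ℂ m (Polynomial.expand ℂ (e 1) q) = Polynomial.expand ℂ (e j) q
    rw [Polynomial.expand_expand, ← hmK]
  -- Y₀ and Rr
  set Y₀ : Polynomial ℂ := Polynomial.expand ℂ m (Y 1) with hY₀def
  set Rr : Polynomial ℂ := ∑ ℓ ∈ Finset.Icc 2 j,
      (Polynomial.C (c ℓ) * Polynomial.X ^ E j ℓ + φs j ℓ) with hRrdef
  have hY1 : Y 1 = Polynomial.C (c 1) * Polynomial.X ^ P + φs 1 1 := by
    rw [hY 1 le_rfl h1s]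
    rw [show Finset.Icc 1 1 = {1} from rfl, Finset.sum_singleton]
  have hφsE : ∀ i ℓ : ℕ, 1 ≤ i → i ≤ s → 1 ≤ ℓ → ℓ ≤ i →
      Polynomial.expand ℂ (e s / e i) (φs i ℓ) = φ ℓ := by
    intro i ℓ hi1 his hℓ1 hℓi
    rw [Polynomial.expand_eq_comp_X_pow]
    exact hφs i hi1 his ℓ hℓ1 hℓi
  have hφsj1 : φs j 1 = Polynomial.expand ℂ m (φs 1 1) := by
    apply Polynomial.expand_injective (show 0 < e s / e j by omega)
    rw [Polynomial.expand_expand]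
    rw [show e s / e j * m = e s / e 1 by rw [hesj, hes1]]
    rw [hφsE 1 1 le_rfl h1s le_rfl le_rfl]
    exact hφsE j 1 hj1 hjs le_rfl hj1
  have hY₀eq : Y₀ = Polynomial.C (c 1) * Polynomial.X ^ (m * P) + Polynomial.expand ℂ m (φs 1 1) := by
    rw [hY₀def, hY1, map_add, map_mul, Polynomial.expand_C, map_pow, Polynomial.expand_X,
      ← pow_mul]
  have hYj : Y j = Y₀ + Rr := by
    rw [hY j hj1 hjs]
    have hsplit : Finset.Icc 1 j = insert 1 (Finset.Icc 2 j) := by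
      ext x
      simp only [Finset.mem_Icc, Finset.mem_insert]
      omega
    rw [hsplit, Finset.sum_insert (by simp)]
    rw [hY₀eq, ← hφsj1, hPj, hRrdef]
  have hmpos : 0 < m := hm1
  -- order facts for Y₀
  have hexp1 : OGpf (Polynomial.expand ℂ m (φs 1 1)) (m * P + 1) := by
    intro i hi
    rw [Polynomial.coeff_expand hmpos]
    split_ifs with hdvdi
    · by_contra hne
      have hc' : (φ 1).coeff (i / m * (e s / e 1)) ≠ 0 := by
        rw [← hφsE 1 1 le_rfl h1s le_rfl le_rfl, Polynomial.coeff_expand_mul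
          (show 0 < e s / e 1 by rw [hes1]; positivity)]
        exact hne
      have hord := hφord 1 le_rfl h1s _ (Polynomial.mem_support_iff.mpr hc')
      have hesq : ((e s : ℕ) : ℚ) = ((e s / e 1 : ℕ) : ℚ) * (e 1 : ℚ) := by
        rw [hes1]
        push_cast [hDeq, hmK]
        ring
      rw [hesq] at hord
      push_cast at hord
      have hDmpos : (0:ℚ) < ((e s / e 1 : ℕ) : ℚ) := by
        rw [hes1]; positivity
      have hPlt : (P : ℚ) < ((i / m : ℕ) : ℚ) := by
        rw [hPq]
        rw [show ((e s / e 1 : ℕ):ℚ) * (e 1:ℚ) * lam 1 = ((e s / e 1 : ℕ):ℚ) * ((e 1:ℚ) * lam 1) by ring] at hord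
        rw [show ((i / m : ℕ):ℚ) * ((e s / e 1 : ℕ):ℚ) = ((e s / e 1 : ℕ):ℚ) * ((i / m : ℕ):ℚ) by ring] at hord
        exact lt_of_mul_lt_mul_left hord (le_of_lt hDmpos)
      have hPlt' : P < i / m := by exact_mod_cast hPlt
      have himeq : m * (i / m) = i := Nat.mul_div_cancel' hdvdi
      have hge : m * (P + 1) ≤ m * (i / m) := Nat.mul_le_mul_left m (by omega)
      have : m * (P + 1) = m * P + m := by ring
      omega
    · rfl
  have hOGY₀ : OGpf Y₀ (m * P) := by
    rw [hY₀eq]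
    apply OGpf_add
    · intro i hi
      rw [Polynomial.coeff_C_mul, Polynomial.coeff_X_pow, if_neg (by omega), mul_zero]
    · exact hexp1.mono (by omega)
  have hY₀co : Y₀.coeff (m * P) = c 1 := by
    rw [hY₀eq, Polynomial.coeff_add, Polynomial.coeff_C_mul, Polynomial.coeff_X_pow, if_pos rfl,
      mul_one, hexp1 (m * P) (by omega), add_zero]
  -- order facts for Rr
  have hDpos : 0 < e s / e j := by omega
  have hesqj : ((e s : ℕ) : ℚ) = ((e s / e j : ℕ) : ℚ) * (e j : ℚ) := by
    rw [hesj]; push_cast [hDeq]; ring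
  have hDposq : (0:ℚ) < ((e s / e j : ℕ) : ℚ) := by exact_mod_cast hDpos
  have hlam2le : ∀ ℓ, 2 ≤ ℓ → ℓ ≤ s → lam 2 ≤ lam ℓ := by
    intro ℓ hℓ2 hℓs
    rcases Nat.eq_or_lt_of_le hℓ2 with h | h
    · rw [← h]
    · exact le_of_lt (hstrictlam 2 ℓ (by omega) h hℓs)
  have hφsjℓ : ∀ ℓ, 2 ≤ ℓ → ℓ ≤ j → OGpf (φs j ℓ) (Q + 1) := by
    intro ℓ hℓ2 hℓj i hi
    by_contra hne
    have hc' : (φ ℓ).coeff (i * (e s / e j)) ≠ 0 := by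
      rw [← hφsE j ℓ hj1 hjs (by omega) hℓj, Polynomial.coeff_expand_mul hDpos]
      exact hne
    have hord := hφord ℓ (by omega) (by omega) _ (Polynomial.mem_support_iff.mpr hc')
    rw [hesqj] at hord
    push_cast at hord
    -- (D:ℚ) * e j * lam ℓ < i * D
    have hlt : (e j : ℚ) * lam ℓ < (i : ℚ) := by
      have h1 : ((e s / e j : ℕ):ℚ) * ((e j:ℚ) * lam ℓ) < ((e s / e j : ℕ):ℚ) * (i:ℚ) := by
        calc ((e s / e j : ℕ):ℚ) * ((e j:ℚ) * lam ℓ) = ((e s / e j : ℕ):ℚ) * (e j:ℚ) * lam ℓ := by ring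
          _ < (i : ℚ) * ((e s / e j : ℕ):ℚ) := hord
          _ = ((e s / e j : ℕ):ℚ) * (i:ℚ) := by ring
      exact lt_of_mul_lt_mul_left h1 (le_of_lt hDposq)
    have hQlt : (Q : ℚ) < (i : ℚ) := by
      rw [hQq]
      calc (e j:ℚ) * lam 2 ≤ (e j:ℚ) * lam ℓ :=
            mul_le_mul_of_nonneg_left (hlam2le ℓ hℓ2 (by omega)) (le_of_lt hejpos)
        _ < (i : ℚ) := hlt
    have : Q < i := by exact_mod_cast hQlt
    omega
  have hEjℓge : ∀ ℓ, 2 ≤ ℓ → ℓ ≤ j → Q ≤ E j ℓ := by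
    intro ℓ hℓ2 hℓj
    have h1 : (Q:ℚ) ≤ ((E j ℓ : ℕ):ℚ) := by
      rw [hQq, hE j hj1 hjs ℓ (by omega) hℓj]
      exact mul_le_mul_of_nonneg_left (hlam2le ℓ hℓ2 (by omega)) (le_of_lt hejpos)
    exact_mod_cast h1
  have hEjℓgt : ∀ ℓ, 3 ≤ ℓ → ℓ ≤ j → Q + 1 ≤ E j ℓ := by
    intro ℓ hℓ3 hℓj
    have h1 : (Q:ℚ) < ((E j ℓ : ℕ):ℚ) := by
      rw [hQq, hE j hj1 hjs ℓ (by omega) hℓj]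
      exact mul_lt_mul_of_pos_left (hstrictlam 2 ℓ (by omega) (by omega) (by omega)) hejpos
    have : Q < E j ℓ := by exact_mod_cast h1
    omega
  have hOGRr : OGpf Rr Q := by
    rw [hRrdef]
    apply OGpf_sum
    intro ℓ hℓ
    rw [Finset.mem_Icc] at hℓ
    apply OGpf_add
    · intro i hi
      rw [Polynomial.coeff_C_mul, Polynomial.coeff_X_pow,
        if_neg (by have := hEjℓge ℓ hℓ.1 hℓ.2; omega), mul_zero]
    · exact (hφsjℓ ℓ hℓ.1 hℓ.2).mono (by omega)
  have hRrQ : Rr.coeff Q = c 2 := by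
    rw [hRrdef, Polynomial.finset_sum_coeff]
    rw [Finset.sum_eq_single 2]
    · rw [Polynomial.coeff_add, Polynomial.coeff_C_mul, ← hQdef, Polynomial.coeff_X_pow,
        if_pos rfl, mul_one, hφsjℓ 2 le_rfl hj2 Q (by omega), add_zero]
    · intro ℓ hℓ hne2
      rw [Finset.mem_Icc] at hℓ
      rw [Polynomial.coeff_add, Polynomial.coeff_C_mul, Polynomial.coeff_X_pow,
        if_neg (by have := hEjℓgt ℓ (by omega) hℓ.2; omega), mul_zero, zero_add]
      exact hφsjℓ ℓ hℓ.1 hℓ.2 Q (by omega)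
    · intro hmem
      exact absurd (Finset.mem_Icc.mpr ⟨le_rfl, hj2⟩) hmem
  -- key expansion
  have hkey : ∀ W : Polynomial (Polynomial ℂ), (Polynomial.map Ψ W).natDegree ≤ e 1 →
      Polynomial.eval₂ Ψ (Y j) W =
        ∑ n ∈ Finset.range (e 1 + 1), Polynomial.eval₂ Ψ Y₀ (Polynomial.hasseDeriv n W) * Rr ^ n := by
    intro W hdeg
    rw [← Polynomial.eval_map, hYj, add_comm Y₀ Rr, ← Polynomial.taylor_eval]
    rw [Polynomial.eval_eq_sum_range' (n := e 1 + 1)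
      (by rw [Polynomial.natDegree_taylor]; omega)]
    apply Finset.sum_congr rfl
    intro n _
    rw [Polynomial.taylor_coeff, hasse_map_pf, Polynomial.eval_map]
  -- degree bounds
  have hnatF : (Polynomial.map Ψ F).natDegree ≤ e 1 := by
    apply Polynomial.natDegree_le_iff_coeff_eq_zero.mpr
    intro N hN
    rw [Polynomial.coeff_map, hFhigh N hN, map_zero]
  have hnatFle : F.natDegree ≤ e 1 := by
    apply Polynomial.natDegree_le_iff_coeff_eq_zero.mpr
    intro N hN
    exact hFhigh N hN
  have hnatF' : (Polynomial.map Ψ (Polynomial.derivative F)).natDegree ≤ e 1 := by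
    refine le_trans (Polynomial.natDegree_map_le) ?_
    refine le_trans (Polynomial.natDegree_derivative_le F) ?_
    omega
  -- the hypothesis transformed
  have h00 : Polynomial.eval₂ Ψ Y₀ F = 0 := by
    have h0' : Polynomial.eval₂ (Polynomial.expand ℂ (e 1)).toRingHom (Y 1) F = 0 := by
      rw [← hψ1eq]
      exact h0
    have h2 := congrArg (⇑(Polynomial.expand ℂ m).toRingHom) h0'
    rw [Polynomial.hom_eval₂, hcomphom] at h2
    simpa using h2
  -- B = eval₂ Ψ Y₀ (derivative F)
  have hBeq : Polynomial.eval₂ Ψ Y₀ (Polynomial.derivative F) =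
      Polynomial.C ((e 1 : ℂ)) * Y₀ ^ κ + Polynomial.eval₂ Ψ Y₀ (Polynomial.derivative δ) := by
    rw [hFdef, Polynomial.derivative_add, Polynomial.derivative_X_pow, Polynomial.eval₂_add,
      Polynomial.eval₂_mul, Polynomial.eval₂_C, Polynomial.eval₂_X_pow,
      map_natCast Ψ (e 1), ← Polynomial.C_eq_natCast, show e 1 - 1 = κ from by omega]
  have hOGB2 : OGpf (Polynomial.eval₂ Ψ Y₀ (Polynomial.derivative δ)) (κ * (m * P) + 1) := by
    have hmain := OGpf_eval₂_mul (em := e j) (hepos j hjs) (n := 0) hOGY₀ hOGRr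
      (H := Polynomial.derivative δ) (d := κ * (m * P) + 1) (v := Q) ?_
    · simpa [hΨdef] using hmain
    · intro α β hαβ
      rw [Polynomial.coeff_derivative] at hαβ
      have h2 : (δ.coeff (β + 1)).coeff α ≠ 0 := by
        intro hz
        apply hαβ
        have hCeq : ((β : Polynomial ℂ) + 1) = Polynomial.C ((β : ℂ) + 1) := by
          rw [map_add, map_one, Polynomial.C_eq_natCast]
        rw [hCeq, Polynomial.coeff_mul_C, hz, zero_mul]
      have hst := hedgestrict α (β + 1) h2 (by omega)
      have := arithA_pf (Q := Q) (n := 0) hm1 hQgt (by omega : e 1 = κ + 1)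
        (by rw [show β + 0 + 1 = β + 1 by ring]; exact hst)
      rw [hmK]
      omega
  have hOGBfull : OGpf (Polynomial.eval₂ Ψ Y₀ (Polynomial.derivative F)) (κ * (m * P)) := by
    rw [hBeq]
    exact OGpf_add (OGpf_C_mul _ (OGpf_pow hOGY₀ κ)) (hOGB2.mono (by omega))
  have hBco : (Polynomial.eval₂ Ψ Y₀ (Polynomial.derivative F)).coeff (κ * (m * P)) =
      (e 1 : ℂ) * (c 1) ^ κ := by
    rw [hBeq, Polynomial.coeff_add, Polynomial.coeff_C_mul, coeff_pow_OGpf hOGY₀ κ, hY₀co,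
      hOGB2 _ (by omega), add_zero]
  -- iotaP as eval₂ over expand
  have hiotaeq : ∀ W : Polynomial (Polynomial ℂ),
      iotaP (e j) (Y j) W = Polynomial.eval₂ Ψ (Y j) W := by
    intro W
    show Polynomial.eval₂ (Polynomial.aeval
      ((Polynomial.X : Polynomial ℂ) ^ e j)).toRingHom (Y j) W = _
    rw [hψeq]
  -- Goal 1 pieces
  have hT0 : Polynomial.eval₂ Ψ Y₀ (Polynomial.hasseDeriv 0 F) * Rr ^ 0 = 0 := by
    rw [Polynomial.hasseDeriv_zero', h00, zero_mul]
  have hTn : ∀ n, 2 ≤ n →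
      OGpf (Polynomial.eval₂ Ψ Y₀ (Polynomial.hasseDeriv n F) * Rr ^ n)
        (κ * (m * P) + Q + 1) := by
    intro n hn
    apply OGpf_eval₂_mul (hepos j hjs) hOGY₀ hOGRr
    intro α β hαβ
    rw [Polynomial.hasseDeriv_coeff] at hαβ
    have h2 : (F.coeff (β + n)).coeff α ≠ 0 := by
      intro hz; apply hαβ
      rw [← Polynomial.C_eq_natCast, Polynomial.coeff_C_mul, hz, mul_zero]
    have hb := hFsupp α (β + n) h2
    have := arithB_pf hm1 hQgt (show e 1 = κ + 1 by omega) hn hb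
    rw [hmK]
    omega
  have hsum1 : iotaP (e j) (Y j) F =
      ∑ n ∈ Finset.range (e 1 + 1),
        Polynomial.eval₂ Ψ Y₀ (Polynomial.hasseDeriv n F) * Rr ^ n := by
    rw [hiotaeq]; exact hkey F hnatF
  have hOGsum1 : OGpf (iotaP (e j) (Y j) F) (κ * (m * P) + Q) := by
    rw [hsum1]
    apply OGpf_sum
    intro n _
    match n with
    | 0 => rw [hT0]; exact OGpf_zero _
    | 1 =>
        rw [Polynomial.hasseDeriv_one', pow_one]
        exact OGpf_mul hOGBfull hOGRr
    | (k+2) => exact (hTn (k+2) (by omega)).mono (by omega)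
  have hco1 : (iotaP (e j) (Y j) F).coeff (κ * (m * P) + Q) = (e 1 : ℂ) * c 1 ^ κ * c 2 := by
    rw [hsum1, Polynomial.finset_sum_coeff, Finset.sum_eq_single 1]
    · rw [Polynomial.hasseDeriv_one', pow_one, coeff_mul_OGpf hOGBfull hOGRr, hBco, hRrQ]
    · intro n _ hne
      match n with
      | 0 => rw [hT0, Polynomial.coeff_zero]
      | 1 => exact absurd rfl hne
      | (k+2) => exact hTn (k+2) (by omega) _ (by omega)
    · intro h1mem
      exact absurd (Finset.mem_range.mpr (by omega)) h1mem
  have hce1 : ((e 1 : ℕ) : ℂ) ≠ 0 := Nat.cast_ne_zero.mpr (by omega)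
  have hne1 : (e 1 : ℂ) * c 1 ^ κ * c 2 ≠ 0 :=
    mul_ne_zero (mul_ne_zero hce1 (pow_ne_zero _ (hc 1 le_rfl h1s))) (hc 2 (by omega) hs2)
  have htd1 : (iotaP (e j) (Y j) F).trailingDegree = ((κ * (m * P) + Q : ℕ) : ℕ∞) :=
    td_OGpf hOGsum1 (by rw [hco1]; exact hne1)
  have hmPq : (m : ℚ) * (P : ℚ) = (e j : ℚ) * lam 1 := by
    push_cast at hPjq
    linarith [hPjq]
  have hgamval : gam j 2 = ((κ * (m * P) + Q : ℕ) : ℚ) := by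
    have hg2 := hgam j hj1 hjs 1 le_rfl (by omega)
    rw [hgam1 j hj1 hjs] at hg2
    rw [hg2]
    have hKcast : (kk 1 : ℚ) = (κ : ℚ) + 1 := by
      rw [← hKq]
      exact_mod_cast congrArg (Nat.cast (R := ℚ)) hκ
    push_cast
    rw [hKcast, hmPq, hQq]
    ring
  -- Goal 2 pieces
  have hsum2 : iotaP (e j) (Y j) (Polynomial.derivative F) =
      ∑ n ∈ Finset.range (e 1 + 1),
        Polynomial.eval₂ Ψ Y₀ (Polynomial.hasseDeriv n (Polynomial.derivative F)) * Rr ^ n := by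
    rw [hiotaeq]; exact hkey _ hnatF'
  have hT'n : ∀ n, 1 ≤ n →
      OGpf (Polynomial.eval₂ Ψ Y₀ (Polynomial.hasseDeriv n (Polynomial.derivative F)) * Rr ^ n)
        (κ * (m * P) + 1) := by
    intro n hn
    apply OGpf_eval₂_mul (hepos j hjs) hOGY₀ hOGRr
    intro α β hαβ
    rw [Polynomial.hasseDeriv_coeff] at hαβ
    have h2 : ((Polynomial.derivative F).coeff (β + n)).coeff α ≠ 0 := by
      intro hz; apply hαβ
      rw [← Polynomial.C_eq_natCast, Polynomial.coeff_C_mul, hz, mul_zero]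
    rcases hF'supp α (β + n) h2 with hcase | ⟨hα0, hβn⟩
    · have := arithA_pf hm1 hQgt (show e 1 = κ + 1 by omega) hcase
      rw [hmK]
      omega
    · have := arithC_pf (m := m) (P := P) hQgt (show β + n = κ by omega) hn
      rw [hα0, hmK]
      omega
  have hT'0 : Polynomial.eval₂ Ψ Y₀ (Polynomial.hasseDeriv 0 (Polynomial.derivative F)) * Rr ^ 0 =
      Polynomial.eval₂ Ψ Y₀ (Polynomial.derivative F) := by
    rw [Polynomial.hasseDeriv_zero', pow_zero, mul_one]
  have hOGsum2 : OGpf (iotaP (e j) (Y j) (Polynomial.derivative F)) (κ * (m * P)) := by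
    rw [hsum2]
    apply OGpf_sum
    intro n _
    match n with
    | 0 => rw [hT'0]; exact hOGBfull
    | (k+1) => exact (hT'n (k+1) (by omega)).mono (by omega)
  have hco2 : (iotaP (e j) (Y j) (Polynomial.derivative F)).coeff (κ * (m * P)) =
      (e 1 : ℂ) * c 1 ^ κ := by
    rw [hsum2, Polynomial.finset_sum_coeff, Finset.sum_eq_single 0]
    · rw [hT'0, hBco]
    · intro n _ hne
      match n with
      | 0 => exact absurd rfl hne
      | (k+1) => exact hT'n (k+1) (by omega) _ (by omega)
    · intro h0mem
      exact absurd (Finset.mem_range.mpr (by omega)) h0mem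
  have hne2 : (e 1 : ℂ) * c 1 ^ κ ≠ 0 :=
    mul_ne_zero hce1 (pow_ne_zero _ (hc 1 le_rfl h1s))
  have htd2 : (iotaP (e j) (Y j) (Polynomial.derivative F)).trailingDegree =
      ((κ * (m * P) : ℕ) : ℕ∞) :=
    td_OGpf hOGsum2 (by rw [hco2]; exact hne2)
  have hgamval2 : gam j 2 - (e j : ℚ) * lam 2 = ((κ * (m * P) : ℕ) : ℚ) := by
    rw [hgamval, ← hQq]
    push_cast
    ring
  constructor
  · show pOrdQ (iotaP (e j) (Y j) F) = _
    rw [pOrdQ, htd1, hgamval]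
    rfl
  · show pOrdQ (iotaP (e j) (Y j) (Polynomial.derivative F)) = _
    rw [pOrdQ, htd2, hgamval2]
    rfl
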